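/- In the quotient ring 𝔽₂[u₁,u₂]/(u₁^{d+1}, u₂^{d+1}) with d = 3·2^{q+1} − 2 (q ≥ 0), the product (u₁u₂(u₁+u₂))^{2^{q+2}−2} · u₂^{2} equals u₁^d u₂^d. -/

import Mathlib

open MvPolynomial

/-- The ideal `(u₁^{d+1}, …, u_k^{d+1})` of the truncated polynomial ring. -/
noncomputable def truncIdeal (k d : ℕ) : Ideal (MvPolynomial (Fin k) (ZMod 2)) :=
  Ideal.span (Set.range fun i : Fin k => (X i : MvPolynomial (Fin k) (ZMod 2)) ^ (d + 1))

namespace Stmt5Aux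

abbrev R := MvPolynomial (Fin 2) (ZMod 2)

local instance : Fact (Nat.Prime 2) := ⟨Nat.prime_two⟩

lemma geom (u v : R) (h : u + v ≠ 0) (k : ℕ) :
    (u + v) ^ (2 ^ k - 1) = ∑ i ∈ Finset.range (2 ^ k), u ^ i * v ^ (2 ^ k - 1 - i) := by
  have hsub : u - v = u + v := CharTwo.sub_eq_add u v
  have hg := geom_sum₂_mul u v (2 ^ k)
  rw [hsub] at hg
  have hc : (u + v) ^ (2 ^ k) = u ^ (2 ^ k) + v ^ (2 ^ k) := add_pow_char_pow ..
  have hsub2 : u ^ (2 ^ k) - v ^ (2 ^ k) = u ^ (2 ^ k) + v ^ (2 ^ k) :=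
    CharTwo.sub_eq_add _ _
  rw [hsub2, ← hc] at hg
  have hpow : (u + v) ^ (2 ^ k) = (u + v) ^ (2 ^ k - 1) * (u + v) := by
    rw [← pow_succ]
    congr 1
    have : 0 < 2 ^ k := pow_pos (by norm_num) k
    omega
  rw [hpow] at hg
  exact (mul_right_cancel₀ h hg).symm

lemma Xadd_sq_ne : (X 0 ^ 2 + X 1 ^ 2 : R) ≠ 0 := by
  intro h
  have := congrArg (eval fun i : Fin 2 => if i = 0 then (1 : ZMod 2) else 0) h
  simp at this

end Stmt5Aux

open Stmt5Aux in
/-- In `𝔽₂[u₁,u₂]/(u₁^{d+1},u₂^{d+1})` with `d = 3·2^{q+1} − 2`,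
`(u₁u₂(u₁+u₂))^{2^{q+2}−2} · u₂² = u₁^d u₂^d`. -/
theorem stmt5 (q : ℕ) :
    Ideal.Quotient.mk (truncIdeal 2 (3 * 2 ^ (q + 1) - 2))
        ((X 0 * X 1 * (X 0 + X 1)) ^ (2 ^ (q + 2) - 2) * X 1 ^ 2) =
      Ideal.Quotient.mk (truncIdeal 2 (3 * 2 ^ (q + 1) - 2))
        (X 0 ^ (3 * 2 ^ (q + 1) - 2) * X 1 ^ (3 * 2 ^ (q + 1) - 2)) := by
  set a := 2 ^ (q + 1) with ha
  have hq2 : 2 * 2 ^ q = a := by rw [ha, pow_succ]; ring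
  have hqpos : 0 < 2 ^ q := pow_pos (by norm_num) q
  have h22 : 2 ^ (q + 2) - 2 = 2 * a - 2 := by
    rw [pow_succ, ← ha]; omega
  rw [h22]
  -- the square expansion in char 2
  have h1 : ((X 0 + X 1 : R)) ^ (2 * a - 2) = (X 0 ^ 2 + X 1 ^ 2) ^ (a - 1) := by
    have h2a : 2 * a - 2 = 2 * (a - 1) := by omega
    rw [h2a, pow_mul, add_pow_char (p := 2)]
  have hgeom := geom (X 0 ^ 2) (X 1 ^ 2) Xadd_sq_ne (q + 1)
  rw [← ha] at hgeom
  have key : ((X 0 * X 1 * (X 0 + X 1) : R)) ^ (2 * a - 2) * X 1 ^ 2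
      = ∑ i ∈ Finset.range a, X 0 ^ (2 * a - 2 + 2 * i) * X 1 ^ (2 * a + 2 * (a - 1 - i)) := by
    rw [mul_pow, mul_pow, h1, hgeom, Finset.mul_sum, Finset.sum_mul]
    refine Finset.sum_congr rfl fun i hi => ?_
    rw [Finset.mem_range] at hi
    have h2 : 2 * a + 2 * (a - 1 - i) = (2 * a - 2) + 2 + 2 * (a - 1 - i) := by omega
    rw [h2]
    ring
  have hXmem : ∀ (j : Fin 2) (e : ℕ), 3 * a - 2 + 1 ≤ e →
      (X j : R) ^ e ∈ truncIdeal 2 (3 * a - 2) := by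
    intro j e he
    have hsplit : (X j : R) ^ e = X j ^ (3 * a - 2 + 1) * X j ^ (e - (3 * a - 2 + 1)) := by
      rw [← pow_add]; congr 1; omega
    rw [hsplit]
    exact Ideal.mul_mem_right _ _ (Ideal.subset_span ⟨j, rfl⟩)
  have hmem : ∀ i ∈ (Finset.range a).erase (2 ^ q),
      (X 0 : R) ^ (2 * a - 2 + 2 * i) * X 1 ^ (2 * a + 2 * (a - 1 - i))
        ∈ truncIdeal 2 (3 * a - 2) := by
    intro i hi
    obtain ⟨hne, hlt⟩ := Finset.mem_erase.mp hi
    rw [Finset.mem_range] at hlt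
    rcases lt_or_gt_of_ne hne with h | h
    · exact Ideal.mul_mem_left _ _ (hXmem 1 _ (by omega))
    · exact Ideal.mul_mem_right _ _ (hXmem 0 _ (by omega))
  have hin : 2 ^ q ∈ Finset.range a := Finset.mem_range.mpr (by omega)
  have hsum : (∑ i ∈ Finset.range a,
        (X 0 : R) ^ (2 * a - 2 + 2 * i) * X 1 ^ (2 * a + 2 * (a - 1 - i)))
      = X 0 ^ (2 * a - 2 + 2 * 2 ^ q) * X 1 ^ (2 * a + 2 * (a - 1 - 2 ^ q))
        + ∑ i ∈ (Finset.range a).erase (2 ^ q),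
            X 0 ^ (2 * a - 2 + 2 * i) * X 1 ^ (2 * a + 2 * (a - 1 - i)) :=
    (Finset.add_sum_erase _ _ hin).symm
  have he0 : 2 * a - 2 + 2 * 2 ^ q = 3 * a - 2 := by omega
  have he1 : 2 * a + 2 * (a - 1 - 2 ^ q) = 3 * a - 2 := by omega
  rw [key, hsum, he0, he1, map_add,
    (Ideal.Quotient.eq_zero_iff_mem).mpr (Ideal.sum_mem _ hmem), add_zero]
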